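/- On CP^{2m−1} = Sp(m)/(Sp(m−1)×U(1)), m ≥ 2, with the standard Sp(m)-homogeneous metric, if u, v ∈ m satisfy [u,v] = 0 in sp(m), then u and v are linearly dependent. Consequently the standard Sp(m)-homogeneous metric has strictly positive sectional curvature. -/

import Mathlib

open scoped Quaternion
open Matrix

private lemma key_prop {m : ℕ} [NeZero m]
    (u v : Matrix (Fin m) (Fin m) ℍ[ℝ])
    (huskew : uᴴ = -u)
    (humem : ∀ j l : Fin m, j ≠ 0 → l ≠ 0 → u j l = 0)
    (hu00 : (u 0 0).imI = 0)
    (hvskew : vᴴ = -v)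
    (hvmem : ∀ j l : Fin m, j ≠ 0 → l ≠ 0 → v j l = 0)
    (hv00 : (v 0 0).imI = 0)
    (hcomm : u * v = v * u) :
    (∃ c : ℝ, v = c • u) ∨ u = 0 := by
  classical
  -- first column in terms of first row
  have hu0 : ∀ j : Fin m, u j 0 = -star (u 0 j) := by
    intro j
    have h1 : star (u j 0) = -(u 0 j) := by
      have := congrFun (congrFun huskew 0) j
      simpa [Matrix.conjTranspose_apply] using this
    have := congrArg star h1
    simpa using this
  have hv0 : ∀ j : Fin m, v j 0 = -star (v 0 j) := by
    intro j
    have h1 : star (v j 0) = -(v 0 j) := by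
      have := congrFun (congrFun hvskew 0) j
      simpa [Matrix.conjTranspose_apply] using this
    have := congrArg star h1
    simpa using this
  have hentry : ∀ j l, ∑ k, u j k * v k l = ∑ k, v j k * u k l := by
    intro j l
    have := congrFun (congrFun hcomm j) l
    simpa [Matrix.mul_apply] using this
  -- E1 : for l ≠ 0, u00 * v0l = v00 * u0l
  have E1 : ∀ l : Fin m, l ≠ 0 → u 0 0 * v 0 l = v 0 0 * u 0 l := by
    intro l hl
    have h1 : ∑ k, u 0 k * v k l = u 0 0 * v 0 l := by
      apply Finset.sum_eq_single 0
      · intro k _ hk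
        rw [hvmem k l hk hl, mul_zero]
      · intro h; exact absurd (Finset.mem_univ 0) h
    have h2 : ∑ k, v 0 k * u k l = v 0 0 * u 0 l := by
      apply Finset.sum_eq_single 0
      · intro k _ hk
        rw [humem k l hk hl, mul_zero]
      · intro h; exact absurd (Finset.mem_univ 0) h
    rw [← h1, ← h2]; exact hentry 0 l
  -- E2 : for j l ≠ 0, star(u0j) * v0l = star(v0j) * u0l
  have E2 : ∀ j l : Fin m, j ≠ 0 → l ≠ 0 →
      star (u 0 j) * v 0 l = star (v 0 j) * u 0 l := by
    intro j l hj hl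
    have h1 : ∑ k, u j k * v k l = u j 0 * v 0 l := by
      apply Finset.sum_eq_single 0
      · intro k _ hk
        rw [humem j k hj hk, zero_mul]
      · intro h; exact absurd (Finset.mem_univ 0) h
    have h2 : ∑ k, v j k * u k l = v j 0 * u 0 l := by
      apply Finset.sum_eq_single 0
      · intro k _ hk
        rw [hvmem j k hj hk, zero_mul]
      · intro h; exact absurd (Finset.mem_univ 0) h
    have h3 : u j 0 * v 0 l = v j 0 * u 0 l := by
      rw [← h1, ← h2]; exact hentry j l
    rw [hu0, hv0] at h3
    have := h3
    simpa [neg_mul, neg_inj] using this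
  by_cases hα : ∀ l : Fin m, l ≠ 0 → u 0 l = 0
  · -- first row of u (off-diagonal) vanishes
    by_cases ha : u 0 0 = 0
    · right
      refine Matrix.ext fun j l => ?_
      rcases eq_or_ne j 0 with hj | hj
      · rcases eq_or_ne l 0 with hl | hl
        · subst hj; subst hl; simpa using ha
        · subst hj; simpa using hα l hl
      · rcases eq_or_ne l 0 with hl | hl
        · subst hl
          rw [hu0 j, hα j hj]
          simp
        · simpa using humem j l hj hl
    · left
      -- v's off-diagonal first row vanishes too
      have hβ : ∀ l : Fin m, l ≠ 0 → v 0 l = 0 := by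
        intro l hl
        have h := E1 l hl
        rw [hα l hl, mul_zero] at h
        exact (mul_eq_zero.mp h).resolve_left ha
      -- the two diagonal entries commute
      have hab : u 0 0 * v 0 0 = v 0 0 * u 0 0 := by
        have h1 : ∑ k, u 0 k * v k 0 = u 0 0 * v 0 0 := by
          apply Finset.sum_eq_single 0
          · intro k _ hk
            rw [hα k hk, zero_mul]
          · intro h; exact absurd (Finset.mem_univ 0) h
        have h2 : ∑ k, v 0 k * u k 0 = v 0 0 * u 0 0 := by
          apply Finset.sum_eq_single 0
          · intro k _ hk
            rw [hβ k hk, zero_mul]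
          · intro h; exact absurd (Finset.mem_univ 0) h
        rw [← h1, ← h2]; exact hentry 0 0
      set a := u 0 0 with ha_def
      set b := v 0 0 with hb_def
      have hare : a.re = 0 := by
        have h1 : star a = -a := by
          have := congrFun (congrFun huskew 0) 0
          simpa [Matrix.conjTranspose_apply] using this
        have := congrArg QuaternionAlgebra.re h1
        simp at this
        linarith
      have hbre : b.re = 0 := by
        have h1 : star b = -b := by
          have := congrFun (congrFun hvskew 0) 0
          simpa [Matrix.conjTranspose_apply] using this
        have := congrArg QuaternionAlgebra.re h1
        simp at this
        linarith
      have hcross : a.imJ * b.imK = a.imK * b.imJ := by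
        have := congrArg QuaternionAlgebra.imI hab
        rw [Quaternion.imI_mul, Quaternion.imI_mul] at this
        rw [hare, hbre, hu00, hv00] at this
        ring_nf at this ⊢
        linarith
      have hd : a.imJ ^ 2 + a.imK ^ 2 ≠ 0 := by
        intro h
        have hJ : a.imJ = 0 := by nlinarith [sq_nonneg a.imJ, sq_nonneg a.imK]
        have hK : a.imK = 0 := by nlinarith [sq_nonneg a.imJ, sq_nonneg a.imK]
        apply ha
        ext <;> simp [hare, hu00, hJ, hK]
      set c : ℝ := (a.imJ * b.imJ + a.imK * b.imK) / (a.imJ ^ 2 + a.imK ^ 2) with hc_def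
      have hba : b = c • a := by
        apply Quaternion.ext
        · simp [hare, hbre]
        · simp [hu00, hv00]
        · show b.imJ = c • a.imJ
          rw [smul_eq_mul, hc_def, div_mul_eq_mul_div, eq_div_iff hd]
          linear_combination (-a.imK) * hcross
        · show b.imK = c • a.imK
          rw [smul_eq_mul, hc_def, div_mul_eq_mul_div, eq_div_iff hd]
          linear_combination a.imJ * hcross
      refine ⟨c, ?_⟩
      refine Matrix.ext fun j l => ?_
      rw [Matrix.smul_apply]
      rcases eq_or_ne j 0 with hj | hj
      · rcases eq_or_ne l 0 with hl | hl
        · subst hj; subst hl; exact hba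
        · subst hj; rw [hβ l hl, hα l hl, smul_zero]
      · rcases eq_or_ne l 0 with hl | hl
        · subst hl
          rw [hu0 j, hv0 j, hβ j hj, hα j hj]
          simp
        · rw [humem j l hj hl, hvmem j l hj hl, smul_zero]
  · left
    push_neg at hα
    obtain ⟨p, hp0, hup⟩ := hα
    have hsup : star (u 0 p) ≠ 0 := star_ne_zero.mpr hup
    set q : ℍ[ℝ] := (star (u 0 p))⁻¹ * star (v 0 p) with hq_def
    have hq1 : ∀ l : Fin m, l ≠ 0 → v 0 l = q * u 0 l := by
      intro l hl
      have h := E2 p l hp0 hl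
      calc v 0 l = (star (u 0 p))⁻¹ * (star (u 0 p) * v 0 l) := by
            rw [inv_mul_cancel_left₀ hsup]
        _ = (star (u 0 p))⁻¹ * (star (v 0 p) * u 0 l) := by rw [h]
        _ = q * u 0 l := by rw [hq_def, mul_assoc]
    have hqstar : star q = q := by
      have h1 : star q = v 0 p * (u 0 p)⁻¹ := by
        rw [hq_def, StarMul.star_mul, star_inv₀, star_star, star_star]
      rw [h1, hq1 p hp0, mul_inv_cancel_right₀ hup]
    have hqre : q = ((q.re : ℝ) : ℍ[ℝ]) := Quaternion.star_eq_self.mp hqstar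
    have hqcomm : ∀ x : ℍ[ℝ], x * q = q * x := by
      intro x
      rw [hqre]
      exact (Quaternion.coe_commutes q.re x).symm
    have hb : v 0 0 = q * u 0 0 := by
      have h := E1 p hp0
      rw [hq1 p hp0] at h
      have h2 : u 0 0 * q * u 0 p = v 0 0 * u 0 p := by
        rw [mul_assoc]; exact h
      have h3 : u 0 0 * q = v 0 0 := mul_right_cancel₀ hup h2
      rw [← h3, hqcomm]
    refine ⟨q.re, ?_⟩
    refine Matrix.ext fun j l => ?_
    rw [Matrix.smul_apply]
    have hsmul : ∀ x : ℍ[ℝ], q.re • x = q * x := by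
      intro x
      rw [hqre]
      exact (Quaternion.coe_mul_eq_smul q.re x).symm
    rw [hsmul]
    rcases eq_or_ne j 0 with hj | hj
    · rcases eq_or_ne l 0 with hl | hl
      · subst hj; subst hl; exact hb
      · subst hj; exact hq1 l hl
    · rcases eq_or_ne l 0 with hl | hl
      · subst hl
        rw [hu0 j, hv0 j, hq1 j hj, StarMul.star_mul, hqstar, mul_neg, neg_inj]
        exact hqcomm (star (u 0 j))
      · rw [humem j l hj hl, hvmem j l hj hl, mul_zero]

/-- On `CP^{2m−1} = Sp(m)/(Sp(m−1)×U(1))`, `m ≥ 2`, realizing `sp(m)` as the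
quaternionic skew-adjoint `m×m` matrices and `m = k^⊥` as the skew-adjoint matrices
vanishing outside the first row and column whose `(0,0)` entry has no `i`-component: if
`u, v ∈ m` satisfy `[u,v] = 0` in `sp(m)`, then `u` and `v` are linearly dependent.
Consequently (the curvature of the normal homogeneous metric on a plane being positive
iff the bracket of a spanning pair is nonzero) the standard `Sp(m)`-homogeneous metric
has strictly positive sectional curvature. -/
theorem bracket_zero_implies_dependent_CPn
    (m : ℕ) [NeZero m] (hm : 2 ≤ m)
    (u v : Matrix (Fin m) (Fin m) ℍ[ℝ])
    (huskew : uᴴ = -u)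
    (humem : ∀ j l : Fin m, j ≠ 0 → l ≠ 0 → u j l = 0)
    (hu00 : (u 0 0).imI = 0)
    (hvskew : vᴴ = -v)
    (hvmem : ∀ j l : Fin m, j ≠ 0 → l ≠ 0 → v j l = 0)
    (hv00 : (v 0 0).imI = 0) :
    (⁅u, v⁆ = 0 → ¬ LinearIndependent ℝ ![u, v])
    ∧ (LinearIndependent ℝ ![u, v] → ⁅u, v⁆ ≠ 0) := by
  have main : ⁅u, v⁆ = 0 → ¬ LinearIndependent ℝ ![u, v] := by
    intro h hLI
    have hcomm : u * v = v * u := by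
      rw [Ring.lie_def] at h
      exact sub_eq_zero.mp h
    have hune : u ≠ 0 := by
      have := hLI.ne_zero 0
      simpa using this
    have hvne : v ≠ 0 := by
      have := hLI.ne_zero 1
      simpa using this
    rcases key_prop u v huskew humem hu00 hvskew hvmem hv00 hcomm with ⟨c, hc⟩ | h0
    · rcases eq_or_ne c 0 with hc0 | hc0
      · rw [hc0, zero_smul] at hc
        exact hvne hc
      · have h2 := (linearIndependent_fin2.mp hLI).2 c⁻¹
        simp only [Matrix.cons_val_one, Matrix.head_cons, Matrix.cons_val_zero] at h2
        apply h2
        rw [hc, smul_smul, inv_mul_cancel₀ hc0, one_smul]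
    · exact hune h0
  exact ⟨main, fun hLI h => main h hLI⟩
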